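/- Let $B\in\mathbb{R}^{m\times m}$ be symmetric and define $\mathcal{A}(X) = X\left(\tfrac{3}{2}I_s - \tfrac{1}{2}X^\top B X\right)$ on $\mathbb{R}^{m\times s}$. If $X^\top B X = I_s$, then $\mathcal{A}(X)=X$, and for every $D\in\mathbb{R}^{m\times s}$, $\frac{d}{dt}\big|_{t=0}\left[\mathcal{A}(X+tD)^\top B\, \mathcal{A}(X+tD)\right] = 0$. -/

import Mathlib

open Matrix

/-- The constraint dissolving operator for the generalized Stiefel manifold
`{X : XᵀBX = Iₛ}`: `𝒜(X) = X (3/2 Iₛ - 1/2 XᵀBX)`. -/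
noncomputable def genStiefelCDO {m s : ℕ} (B : Matrix (Fin m) (Fin m) ℝ)
    (X : Matrix (Fin m) (Fin s) ℝ) : Matrix (Fin m) (Fin s) ℝ :=
  X * ((3 / 2 : ℝ) • (1 : Matrix (Fin s) (Fin s) ℝ) - (1 / 2 : ℝ) • (Xᵀ * B * X))

attribute [local instance] Matrix.normedAddCommGroup Matrix.normedSpace

private theorem myHasDerivAt_pi {ι : Type*} [Fintype ι] {E : ι → Type*}
    [∀ i, NormedAddCommGroup (E i)] [∀ i, NormedSpace ℝ (E i)]
    {f : ℝ → ∀ i, E i} {f' : ∀ i, E i} {x : ℝ} :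
    HasDerivAt f f' x ↔ ∀ i, HasDerivAt (fun x => f x i) (f' i) x := by
  have h : ∀ i, (ContinuousLinearMap.proj i : (∀ i, E i) →L[ℝ] E i).comp
      (ContinuousLinearMap.toSpanSingleton ℝ f')
      = ContinuousLinearMap.toSpanSingleton ℝ (f' i) := by
    intro i; ext; simp
  simp only [hasDerivAt_iff_hasFDerivAt, hasFDerivAt_pi', h]

private theorem hd_entry {a b : ℕ} {F : ℝ → Matrix (Fin a) (Fin b) ℝ}
    {F' : Matrix (Fin a) (Fin b) ℝ} {t : ℝ} (hF : HasDerivAt F F' t)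
    (i : Fin a) (j : Fin b) : HasDerivAt (fun s => F s i j) (F' i j) t :=
  myHasDerivAt_pi.1 (myHasDerivAt_pi.1 hF i) j

private theorem hd_mul {a b c : ℕ} {F : ℝ → Matrix (Fin a) (Fin b) ℝ}
    {G : ℝ → Matrix (Fin b) (Fin c) ℝ} {F' : Matrix (Fin a) (Fin b) ℝ}
    {G' : Matrix (Fin b) (Fin c) ℝ} {t : ℝ}
    (hF : HasDerivAt F F' t) (hG : HasDerivAt G G' t) :
    HasDerivAt (fun s => F s * G s) (F' * G t + F t * G') t := by
  refine myHasDerivAt_pi.2 fun i => ?_; refine myHasDerivAt_pi.2 fun j => ?_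
  have key : HasDerivAt (fun s => ∑ k, F s i k * G s k j)
      (∑ k, (F' i k * G t k j + F t i k * G' k j)) t :=
    HasDerivAt.fun_sum fun k _ => (hd_entry hF i k).mul (hd_entry hG k j)
  have heq : (fun s => (F s * G s) i j) = fun s => ∑ k, F s i k * G s k j := by
    funext s; simp [Matrix.mul_apply]
  have hval : (F' * G t + F t * G') i j = ∑ k, (F' i k * G t k j + F t i k * G' k j) := by
    simp [Matrix.mul_apply, Matrix.add_apply, Finset.sum_add_distrib]
  rwa [← heq, ← hval] at key

private theorem hd_transpose {a b : ℕ} {F : ℝ → Matrix (Fin a) (Fin b) ℝ}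
    {F' : Matrix (Fin a) (Fin b) ℝ} {t : ℝ} (hF : HasDerivAt F F' t) :
    HasDerivAt (fun s => (F s)ᵀ) F'ᵀ t := by
  refine myHasDerivAt_pi.2 fun i => ?_; refine myHasDerivAt_pi.2 fun j => ?_
  exact hd_entry hF j i

/-- for symmetric `B`, if `XᵀBX = Iₛ` then `𝒜(X) = X`, and the
derivative `d/dt |_{t=0} (𝒜(X+tD)ᵀ B 𝒜(X+tD))` vanishes for every direction `D`. -/
theorem genStiefelCDO_fixes_and_constraint_derivative_vanishes {m s : ℕ}
    (B : Matrix (Fin m) (Fin m) ℝ) (hB : Bᵀ = B)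
    (X : Matrix (Fin m) (Fin s) ℝ) (hX : Xᵀ * B * X = 1) :
    genStiefelCDO B X = X ∧
      ∀ D : Matrix (Fin m) (Fin s) ℝ, ∀ i j : Fin s,
        deriv (fun t : ℝ =>
          (((genStiefelCDO B (X + t • D))ᵀ * B * genStiefelCDO B (X + t • D) :
            Matrix (Fin s) (Fin s) ℝ)) i j) 0 = 0 := by
  have hone : (3 / 2 : ℝ) • (1 : Matrix (Fin s) (Fin s) ℝ) -
      (1 / 2 : ℝ) • (1 : Matrix (Fin s) (Fin s) ℝ) = 1 := by
    rw [← sub_smul]; norm_num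
  have hfix : genStiefelCDO B X = X := by
    rw [genStiefelCDO, hX, hone, Matrix.mul_one]
  refine ⟨hfix, fun D i j => ?_⟩
  set P : ℝ → Matrix (Fin m) (Fin s) ℝ := fun t => X + t • D with hPdef
  have hP0 : P 0 = X := by simp [hPdef]
  have hP : HasDerivAt P D 0 := by
    have h6 := ((hasDerivAt_id (0 : ℝ)).smul_const D).const_add X
    rw [one_smul] at h6
    exact h6
  set S : Matrix (Fin s) (Fin s) ℝ := Dᵀ * B * X + Xᵀ * B * D with hSdef
  have hM : HasDerivAt (fun t => (P t)ᵀ * B * P t) S 0 := by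
    have h2 := hd_mul (hd_mul (hd_transpose hP) (hasDerivAt_const (0 : ℝ) B)) hP
    simpa [hP0, hSdef] using h2
  set A' : Matrix (Fin m) (Fin s) ℝ := D - (1 / 2 : ℝ) • (X * S) with hA'def
  have hA : HasDerivAt (fun t => genStiefelCDO B (P t)) A' 0 := by
    have hInner : HasDerivAt
        (fun t => (3 / 2 : ℝ) • (1 : Matrix (Fin s) (Fin s) ℝ) -
          (1 / 2 : ℝ) • ((P t)ᵀ * B * P t)) (-((1 / 2 : ℝ) • S)) 0 := by
      have h5 := (hasDerivAt_const (0 : ℝ) ((3 / 2 : ℝ) • (1 : Matrix (Fin s) (Fin s) ℝ))).sub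
        (hM.const_smul (1 / 2 : ℝ))
      rw [zero_sub] at h5
      exact h5
    have h := hd_mul hP hInner
    rw [hP0, hX, hone] at h
    have hval : D * (1 : Matrix (Fin s) (Fin s) ℝ) + X * -((1 / 2 : ℝ) • S) = A' := by
      rw [hA'def, Matrix.mul_one, Matrix.mul_neg, Matrix.mul_smul, ← sub_eq_add_neg]
    rw [hval] at h
    simpa only [genStiefelCDO] using h
  have hS : Sᵀ = S := by
    rw [hSdef]
    simp only [Matrix.transpose_add, Matrix.transpose_mul, Matrix.transpose_transpose, hB,
      Matrix.mul_assoc]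
    exact add_comm _ _
  have hzero : A'ᵀ * B * X + Xᵀ * B * A' = 0 := by
    have e1 : A'ᵀ * B * X = Dᵀ * B * X - (1 / 2 : ℝ) • S := by
      rw [hA'def, Matrix.transpose_sub, Matrix.transpose_smul, Matrix.transpose_mul, hS,
        Matrix.sub_mul, Matrix.sub_mul, Matrix.smul_mul, Matrix.smul_mul,
        Matrix.mul_assoc (S * Xᵀ) B X, Matrix.mul_assoc S Xᵀ (B * X),
        ← Matrix.mul_assoc Xᵀ B X, hX, Matrix.mul_one]
    have e2 : Xᵀ * B * A' = Xᵀ * B * D - (1 / 2 : ℝ) • S := by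
      rw [hA'def, Matrix.mul_sub, Matrix.mul_smul, ← Matrix.mul_assoc (Xᵀ * B) X S, hX,
        Matrix.one_mul]
    rw [e1, e2, sub_add_sub_comm, ← hSdef, ← add_smul]
    norm_num
  have hG : HasDerivAt
      (fun t => (genStiefelCDO B (P t))ᵀ * B * genStiefelCDO B (P t)) 0 0 := by
    have h := hd_mul (hd_mul (hd_transpose hA) (hasDerivAt_const (0 : ℝ) B)) hA
    have hA0 : genStiefelCDO B (P 0) = X := by rw [hP0, hfix]
    rw [hA0] at h
    simpa [hzero] using h
  have := (hd_entry hG i j).deriv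
  simpa [hPdef] using this
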